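/- Let a > 0 be a real number and let V ∈ ℝ[[X]] be a formal power series whose coefficients in degrees 0, 1 and 2 all vanish, and set S := −X²/(2a) + V ∈ ℝ[[X]]. Then there exists exactly one formal power series x ∈ ℝ[[Y]] with zero constant coefficient and strictly positive coefficient of Y such that −2·S(x) = Y² holds in ℝ[[Y]], where S(x) denotes the substitution of x into S (well defined since x has zero constant coefficient). Moreover, the coefficient of Y in this unique solution x equals √a. -/

import Mathlib

/-- Composition (substitution) of formal power series: `substPS g f` is `f(g)`,
the usual composition when `g` has zero constant coefficient
(the coefficient of `X^n` in `f(g)` is `∑_{k=0}^{n} [X^k]f · [X^n](g^k)`). -/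
noncomputable def substPS (g f : PowerSeries ℝ) : PowerSeries ℝ :=
  PowerSeries.mk fun n => ∑ k ∈ Finset.range (n + 1),
    PowerSeries.coeff k f * PowerSeries.coeff n (g ^ k)

namespace Stmt0Aux

open PowerSeries Finset

lemma coeff_pow_eq_zero {x : PowerSeries ℝ} (hx : constantCoeff x = 0)
    {j k : ℕ} (h : j < k) : coeff j (x ^ k) = 0 := by
  have hd : (X : PowerSeries ℝ) ^ k ∣ x ^ k :=
    pow_dvd_pow_of_dvd (X_dvd_iff.mpr hx) k
  exact (X_pow_dvd_iff.mp hd) j h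

lemma pow_coeff_congr {x y : PowerSeries ℝ} (hx : constantCoeff x = 0)
    (hy : constantCoeff y = 0) {m : ℕ} (h : ∀ i ≤ m, coeff i x = coeff i y) :
    ∀ (k n : ℕ), n + 1 ≤ m + k → coeff n (x ^ k) = coeff n (y ^ k) := by
  intro k
  induction k with
  | zero => intro n _; rfl
  | succ k ih =>
      intro n hn
      rw [pow_succ, pow_succ, coeff_mul, coeff_mul]
      refine Finset.sum_congr rfl ?_
      rintro ⟨i, j⟩ hp
      have hij : i + j = n := Finset.HasAntidiagonal.mem_antidiagonal.mp hp
      by_cases hj0 : j = 0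
      · subst hj0
        simp only [coeff_zero_eq_constantCoeff, hx, hy, mul_zero]
      · by_cases hjm : j ≤ m
        · have h1 := ih i (by omega)
          have h2 := h j hjm
          simp only [h1, h2]
        · have hik : i < k := by omega
          rw [coeff_pow_eq_zero hx hik, coeff_pow_eq_zero hy hik, zero_mul, zero_mul]

/-- Truncation of a power series below degree `m`, as a power series. -/
noncomputable def truncS (x : PowerSeries ℝ) (m : ℕ) : PowerSeries ℝ :=
  PowerSeries.mk fun i => if i < m then coeff i x else 0

lemma constantCoeff_truncS (x : PowerSeries ℝ) (hx : constantCoeff x = 0) (m : ℕ) :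
    constantCoeff (truncS x m) = 0 := by
  rw [← coeff_zero_eq_constantCoeff] at hx ⊢
  simp [truncS, hx]

lemma quad_split (x : PowerSeries ℝ) (hx : constantCoeff x = 0) (n : ℕ) :
    coeff (n + 3) (x ^ 2)
      = 2 * coeff 1 x * coeff (n + 2) x
        + coeff (n + 3) ((truncS x (n + 2)) ^ 2) := by
  have hx0 : coeff 0 x = 0 := by rwa [coeff_zero_eq_constantCoeff]
  rw [pow_two, pow_two, coeff_mul, coeff_mul]
  have key : ∀ p ∈ antidiagonal (n + 3),
      coeff p.1 x * coeff p.2 x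
        = coeff p.1 (truncS x (n+2)) * coeff p.2 (truncS x (n+2))
          + ((if p = (1, n+2) then coeff 1 x * coeff (n+2) x else 0)
            + (if p = (n+2, 1) then coeff 1 x * coeff (n+2) x else 0)) := by
    rintro ⟨i, j⟩ hp
    have hij : i + j = n + 3 := Finset.HasAntidiagonal.mem_antidiagonal.mp hp
    simp only [truncS, coeff_mk, Prod.mk.injEq, Prod.ext_iff]
    by_cases hi0 : i = 0
    · have : j = n + 3 := by omega
      subst hi0 this
      simp [hx0]
    · by_cases hi1 : i = 1
      · have : j = n + 2 := by omega
        subst hi1 this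
        have h1 : (1:ℕ) < n + 2 := by omega
        have h2 : ¬ (n + 2 < n + 2) := by omega
        have h3 : ¬ ((1:ℕ) = n + 2) := by omega
        simp [h1, h2, h3]
      · by_cases hi2 : i = n + 2
        · have : j = 1 := by omega
          subst hi2 this
          have h1 : (1:ℕ) < n + 2 := by omega
          have h2 : ¬ (n + 2 < n + 2) := by omega
          have h3 : ¬ ((n+2:ℕ) = 1) := by omega
          simp [h1, h2, h3, mul_comm]
        · by_cases hi3 : i = n + 3
          · have : j = 0 := by omega
            subst hi3 this
            simp [hx0]
          · have h1 : i < n + 2 := by omega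
            have h2 : j < n + 2 := by omega
            have h3 : ¬ (i = 1 ∧ j = n + 2) := by omega
            have h4 : ¬ (i = n + 2 ∧ j = 1) := by omega
            simp [h1, h2, h3, h4]
  rw [Finset.sum_congr rfl key, Finset.sum_add_distrib, Finset.sum_add_distrib,
    Finset.sum_ite_eq' _ ((1:ℕ), n+2), Finset.sum_ite_eq' _ ((n+2:ℕ), 1)]
  have m1 : ((1:ℕ), n+2) ∈ antidiagonal (n+3) := by
    simp [Finset.mem_antidiagonal]; omega
  have m2 : ((n+2:ℕ), 1) ∈ antidiagonal (n+3) := by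
    simp [Finset.mem_antidiagonal]
  rw [if_pos m1, if_pos m2]
  ring

/-- The action series `S = -X²/(2a) + V`. -/
noncomputable def Fser (a : ℝ) (V : PowerSeries ℝ) : PowerSeries ℝ :=
  PowerSeries.C (-(1 / (2 * a))) * PowerSeries.X ^ 2 + V

lemma coeff_Fser (a : ℝ) (V : PowerSeries ℝ) (k : ℕ) :
    coeff k (Fser a V)
      = (if k = 2 then -(1 / (2 * a)) else 0) + coeff k V := by
  simp only [Fser, map_add, PowerSeries.coeff_C_mul, coeff_X_pow, mul_ite, mul_one, mul_zero]

lemma keyC (a : ℝ) (V : PowerSeries ℝ) (hV1 : coeff 1 V = 0)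
    (hV2 : coeff 2 V = 0)
    (x : PowerSeries ℝ) (hx : constantCoeff x = 0) (n : ℕ) :
    ∑ k ∈ range (n + 4), coeff k (Fser a V) * coeff (n + 3) (x ^ k)
      = -(1 / (2 * a)) * (2 * coeff 1 x * coeff (n + 2) x)
        + ∑ k ∈ range (n + 4), coeff k (Fser a V) * coeff (n + 3) ((truncS x (n + 2)) ^ k) := by
  have hT0 : constantCoeff (truncS x (n + 2)) = 0 := constantCoeff_truncS x hx _
  have key : ∀ k ∈ range (n + 4),
      coeff k (Fser a V) * coeff (n + 3) (x ^ k)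
        = (if k = 2 then -(1 / (2 * a)) * (2 * coeff 1 x * coeff (n + 2) x) else 0)
          + coeff k (Fser a V) * coeff (n + 3) ((truncS x (n + 2)) ^ k) := by
    intro k _
    match k with
    | 0 => simp
    | 1 =>
        have : coeff 1 (Fser a V) = 0 := by simp [coeff_Fser, hV1]
        simp [this]
    | 2 =>
        have hF2 : coeff 2 (Fser a V) = -(1 / (2 * a)) := by simp [coeff_Fser, hV2]
        rw [hF2, quad_split x hx n, if_pos rfl]
        ring
    | (k + 3) =>
        have hcong : coeff (n + 3) (x ^ (k + 3))
            = coeff (n + 3) ((truncS x (n + 2)) ^ (k + 3)) := by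
          refine pow_coeff_congr hx hT0 (m := n + 1) ?_ (k + 3) (n + 3) (by omega)
          intro i hi
          have : i < n + 2 := by omega
          simp [truncS, coeff_mk, this]
        have : ¬ (k + 3 = 2) := by omega
        rw [hcong, if_neg this, zero_add]
  rw [Finset.sum_congr rfl key, Finset.sum_add_distrib, Finset.sum_ite_eq' _ 2,
    if_pos (by simp : (2:ℕ) ∈ range (n + 4))]

/-- Coefficients of the canonical solution, defined recursively. -/
noncomputable def cc (a : ℝ) (V : PowerSeries ℝ) : ℕ → ℝ
  | 0 => 0
  | 1 => Real.sqrt a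
  | n + 2 => Real.sqrt a * ∑ k ∈ range (n + 4),
      coeff k (Fser a V) * coeff (n + 3)
        ((PowerSeries.mk fun i => if h : i < n + 2 then cc a V i else 0) ^ k)
  termination_by n => n
  decreasing_by exact h

/-- The canonical solution. -/
noncomputable def xx (a : ℝ) (V : PowerSeries ℝ) : PowerSeries ℝ :=
  PowerSeries.mk (cc a V)

lemma trunc_xx (a : ℝ) (V : PowerSeries ℝ) (n : ℕ) :
    (PowerSeries.mk fun i => if h : i < n + 2 then cc a V i else 0)
      = truncS (xx a V) (n + 2) := by
  ext i
  by_cases h : i < n + 2 <;> simp [truncS, xx, coeff_mk, h]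

lemma cc_succ (a : ℝ) (V : PowerSeries ℝ) (n : ℕ) :
    cc a V (n + 2) = Real.sqrt a * ∑ k ∈ range (n + 4),
      coeff k (Fser a V) * coeff (n + 3) ((truncS (xx a V) (n + 2)) ^ k) := by
  rw [cc, trunc_xx]

end Stmt0Aux

open PowerSeries Finset Stmt0Aux in
/-- For `a > 0` and `V ∈ ℝ[[X]]` with vanishing coefficients in degrees 0, 1, 2,
set `S = -X²/(2a) + V`. There is exactly one power series `x ∈ ℝ[[Y]]` with zero
constant coefficient and strictly positive linear coefficient with `-2·S(x) = Y²`;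
moreover its linear coefficient equals `√a`. -/
theorem stmt0 (a : ℝ) (ha : 0 < a) (V : PowerSeries ℝ)
    (hV0 : PowerSeries.coeff 0 V = 0) (hV1 : PowerSeries.coeff 1 V = 0)
    (hV2 : PowerSeries.coeff 2 V = 0) :
    (∃! x : PowerSeries ℝ,
      PowerSeries.constantCoeff x = 0 ∧ 0 < PowerSeries.coeff 1 x ∧
        (-2 : ℝ) • substPS x (PowerSeries.C (-(1 / (2 * a))) * PowerSeries.X ^ 2 + V) =
          PowerSeries.X ^ 2) ∧
    ∀ x : PowerSeries ℝ,
      (PowerSeries.constantCoeff x = 0 ∧ 0 < PowerSeries.coeff 1 x ∧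
        (-2 : ℝ) • substPS x (PowerSeries.C (-(1 / (2 * a))) * PowerSeries.X ^ 2 + V) =
          PowerSeries.X ^ 2) →
      PowerSeries.coeff 1 x = Real.sqrt a := by
  have ha' : a ≠ 0 := ne_of_gt ha
  have hs : Real.sqrt a * Real.sqrt a = a := Real.mul_self_sqrt ha.le
  have hsp : 0 < Real.sqrt a := Real.sqrt_pos.mpr ha
  have hFeq : PowerSeries.C (-(1 / (2 * a))) * PowerSeries.X ^ 2 + V = Fser a V := rfl
  -- coefficientwise form of the equation
  have coeff_eq : ∀ (y : PowerSeries ℝ),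
      ((-2 : ℝ) • substPS y (Fser a V) = PowerSeries.X ^ 2) ↔
      (∀ m : ℕ, (-2 : ℝ) * ∑ k ∈ range (m + 1),
          coeff k (Fser a V) * coeff m (y ^ k) = if m = 2 then 1 else 0) := by
    intro y
    constructor
    · intro h m
      have := congrArg (coeff m) h
      rwa [coeff_smul, coeff_X_pow, smul_eq_mul, substPS, coeff_mk] at this
    · intro h
      ext m
      rw [coeff_smul, coeff_X_pow, smul_eq_mul, substPS, coeff_mk]
      exact h m
  -- coeff 2 of y^2 for y with zero constant coefficient
  have coeff2_sq : ∀ (y : PowerSeries ℝ), constantCoeff y = 0 →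
      coeff 2 (y ^ 2) = coeff 1 y * coeff 1 y := by
    intro y hy
    have hy0 : coeff 0 y = 0 := by rwa [coeff_zero_eq_constantCoeff]
    rw [pow_two, coeff_mul, Finset.Nat.sum_antidiagonal_eq_sum_range_succ_mk]
    simp [Finset.sum_range_succ, hy0]
  -- the degree-2 equation forces coeff 1 y = √a
  have sol_one : ∀ (y : PowerSeries ℝ), constantCoeff y = 0 → 0 < coeff 1 y →
      ((-2 : ℝ) • substPS y (Fser a V) = PowerSeries.X ^ 2) →
      coeff 1 y = Real.sqrt a := by
    intro y hy0 hy1 heq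
    have h2 := (coeff_eq y).1 heq 2
    rw [if_pos rfl] at h2
    have hF0 : coeff 0 (Fser a V) = 0 := by simp [coeff_Fser, hV0]
    have hF1 : coeff 1 (Fser a V) = 0 := by simp [coeff_Fser, hV1]
    have hF2 : coeff 2 (Fser a V) = -(1 / (2 * a)) := by simp [coeff_Fser, hV2]
    rw [Finset.sum_range_succ, Finset.sum_range_succ, Finset.sum_range_succ,
      Finset.sum_range_zero, hF0, hF1, hF2, coeff2_sq y hy0] at h2
    have hsq : coeff 1 y * coeff 1 y = a := by
      field_simp at h2
      linarith
    have : coeff 1 y = Real.sqrt (coeff 1 y ^ 2) := (Real.sqrt_sq hy1.le).symm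
    rw [this, pow_two, hsq]
  -- the canonical solution satisfies the equation
  have hxx0 : constantCoeff (xx a V) = 0 := by
    rw [← coeff_zero_eq_constantCoeff]
    simp [xx, coeff_mk, cc]
  have hxx1 : coeff 1 (xx a V) = Real.sqrt a := by
    simp [xx, coeff_mk, cc]
  have hxxeq : (-2 : ℝ) • substPS (xx a V) (Fser a V) = PowerSeries.X ^ 2 := by
    rw [coeff_eq]
    intro m
    match m with
    | 0 =>
        have hF0 : coeff 0 (Fser a V) = 0 := by simp [coeff_Fser, hV0]
        simp [hF0]
    | 1 =>
        have hF0 : coeff 0 (Fser a V) = 0 := by simp [coeff_Fser, hV0]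
        have hF1 : coeff 1 (Fser a V) = 0 := by simp [coeff_Fser, hV1]
        simp [Finset.sum_range_succ, hF0, hF1]
    | 2 =>
        have hF0 : coeff 0 (Fser a V) = 0 := by simp [coeff_Fser, hV0]
        have hF1 : coeff 1 (Fser a V) = 0 := by simp [coeff_Fser, hV1]
        have hF2 : coeff 2 (Fser a V) = -(1 / (2 * a)) := by simp [coeff_Fser, hV2]
        rw [Finset.sum_range_succ, Finset.sum_range_succ, Finset.sum_range_succ,
          Finset.sum_range_zero, hF0, hF1, hF2, coeff2_sq _ hxx0, hxx1, hs, if_pos rfl]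
        field_simp
        ring
    | n + 3 =>
        rw [keyC a V hV1 hV2 (xx a V) hxx0 n]
        have hcn2 : coeff (n + 2) (xx a V) = cc a V (n + 2) := by simp [xx, coeff_mk]
        rw [hcn2, cc_succ a V n, hxx1, if_neg (by omega : ¬ (n + 3 = 2))]
        set St := ∑ k ∈ range (n + 4),
          coeff k (Fser a V) * coeff (n + 3) ((truncS (xx a V) (n + 2)) ^ k) with hSt
        have h2 : 2 * Real.sqrt a * (Real.sqrt a * St) = 2 * a * St := by
          calc 2 * Real.sqrt a * (Real.sqrt a * St)
              = 2 * (Real.sqrt a * Real.sqrt a) * St := by ring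
            _ = 2 * a * St := by rw [hs]
        have : -(1 / (2 * a)) * (2 * Real.sqrt a * (Real.sqrt a * St)) + St = 0 := by
          rw [h2]
          field_simp
          ring
        rw [this, mul_zero]
  -- uniqueness: any solution agrees with xx
  have uniq : ∀ (y : PowerSeries ℝ), constantCoeff y = 0 → 0 < coeff 1 y →
      ((-2 : ℝ) • substPS y (Fser a V) = PowerSeries.X ^ 2) → y = xx a V := by
    intro y hy0 hy1 heq
    have hy1' : coeff 1 y = Real.sqrt a := sol_one y hy0 hy1 heq
    have hy00 : coeff 0 y = 0 := by rwa [coeff_zero_eq_constantCoeff]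
    have main : ∀ i, coeff i y = cc a V i := by
      intro i
      induction i using Nat.strong_induction_on with
      | _ i ih =>
        match i with
        | 0 => rw [hy00, cc]
        | 1 => rw [hy1', cc]
        | n + 2 =>
            have hT : truncS y (n + 2) = truncS (xx a V) (n + 2) := by
              ext j
              by_cases h : j < n + 2
              · simp [truncS, coeff_mk, h, ih j h, xx]
              · simp [truncS, coeff_mk, h]
            have hE := (coeff_eq y).1 heq (n + 3)
            rw [if_neg (by omega : ¬ (n + 3 = 2)),
              keyC a V hV1 hV2 y hy0 n, hy1', hT] at hE
            set St := ∑ k ∈ range (n + 4),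
              coeff k (Fser a V) * coeff (n + 3) ((truncS (xx a V) (n + 2)) ^ k) with hSt
            rw [cc_succ a V n, ← hSt]
            have hE' : -(1 / (2 * a)) * (2 * Real.sqrt a * coeff (n + 2) y) + St = 0 := by
              nlinarith [hE]
            have : Real.sqrt a * coeff (n + 2) y = a * St := by
              field_simp at hE'
              linarith
            have h2 : Real.sqrt a * (Real.sqrt a * coeff (n + 2) y)
                = Real.sqrt a * (a * St) := by rw [this]
            rw [← mul_assoc, hs] at h2
            have := mul_left_cancel₀ ha' (by linarith [h2] : a * coeff (n + 2) y
                = a * (Real.sqrt a * St))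
            exact this
    ext i
    rw [main i]
    simp [xx, coeff_mk]
  rw [hFeq]
  constructor
  · refine ⟨xx a V, ⟨hxx0, ?_, hxxeq⟩, ?_⟩
    · rw [hxx1]; exact hsp
    · rintro y ⟨h0, h1, h2⟩
      exact uniq y h0 h1 h2
  · rintro y ⟨h0, h1, h2⟩
    exact sol_one y h0 h1 h2
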